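/- Let k ≥ 2 and let A_1 ∈ ℝ^{m_1×n}, …, A_k ∈ ℝ^{m_k×n}. Let v ∈ ℝ^n be a unit vector and suppose there is an index i such that h_i(v) > 0 and h_i(v) > h_j(v) for every j ≠ i. Then v is not a minimizer of u ↦ max_{1≤j≤k} h_j(u) over the unit sphere: there exists a unit vector v' with max_{1≤j≤k} h_j(v') < max_{1≤j≤k} h_j(v). -/

import Mathlib

open Matrix

/-- The largest eigenvalue of a real symmetric matrix, via its Rayleigh-quotient
characterization: `λmax(M) = sup { vᵀ M v : ‖v‖ = 1 }`. -/
noncomputable def lamMax {n : ℕ} (M : Matrix (Fin n) (Fin n) ℝ) : ℝ :=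
  sSup {r : ℝ | ∃ v : Fin n → ℝ, v ⬝ᵥ v = 1 ∧ r = v ⬝ᵥ (M *ᵥ v)}

/-- The rank-1 fair loss `h_M(v) = λmax(MᵀM) − vᵀ(MᵀM)v`. -/
noncomputable def fairLoss {m n : ℕ} (M : Matrix (Fin m) (Fin n) ℝ) (v : Fin n → ℝ) : ℝ :=
  lamMax (Mᵀ * M) - v ⬝ᵥ ((Mᵀ * M) *ᵥ v)

lemma dot_eq_inner {n : ℕ} (x y : Fin n → ℝ) :
    x ⬝ᵥ y = (inner ℝ ((WithLp.equiv 2 (Fin n → ℝ)).symm x) ((WithLp.equiv 2 (Fin n → ℝ)).symm y) : ℝ) := by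
  rw [WithLp.equiv_symm_apply, EuclideanSpace.inner_toLp_toLp, star_trivial, dotProduct_comm]

lemma lamMax_spec {n : ℕ} (hn : 0 < n) {N : Matrix (Fin n) (Fin n) ℝ} (hN : N.IsHermitian) :
    ∃ w : Fin n → ℝ, w ⬝ᵥ w = 1 ∧ N *ᵥ w = lamMax N • w ∧
      ∀ u : Fin n → ℝ, u ⬝ᵥ u = 1 → u ⬝ᵥ (N *ᵥ u) ≤ lamMax N := by
  haveI : NeZero n := ⟨hn.ne'⟩
  set b := hN.eigenvectorBasis with hb
  set ev := hN.eigenvalues with hev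
  have hsym := (Matrix.isHermitian_iff_isSymmetric.1 hN)
  obtain ⟨j0, hj0⟩ := Finite.exists_max ev
  set μ := ev j0 with hμ
  -- the quadratic form in eigencoordinates
  have hquad : ∀ u : Fin n → ℝ, u ⬝ᵥ (N *ᵥ u) =
      ∑ j, ev j * (inner ℝ (b j) ((WithLp.equiv 2 (Fin n → ℝ)).symm u) : ℝ)^2 := by
    intro u
    set u' : EuclideanSpace ℝ (Fin n) := (WithLp.equiv 2 (Fin n → ℝ)).symm u with hu'
    have h1 : u ⬝ᵥ (N *ᵥ u) = (inner ℝ u' (Matrix.toEuclideanLin N u') : ℝ) := by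
      rw [dot_eq_inner]; rfl
    rw [h1, ← OrthonormalBasis.sum_inner_mul_inner b u' (Matrix.toEuclideanLin N u')]
    refine Finset.sum_congr rfl fun j _ => ?_
    have h2 : (inner ℝ (b j) (Matrix.toEuclideanLin N u') : ℝ) = ev j * inner ℝ (b j) u' := by
      rw [← hsym (b j) u']
      have h3 : Matrix.toEuclideanLin N (b j) = ev j • (b j) := by
        apply (WithLp.equiv 2 (Fin n → ℝ)).injective
        simp only [WithLp.equiv_apply, Matrix.ofLp_toEuclideanLin_apply, WithLp.ofLp_smul]
        exact hN.mulVec_eigenvectorBasis j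
      rw [h3, inner_smul_left]
      simp
    rw [h2, real_inner_comm (b j) u']
    ring
  have hnorm : ∀ u : Fin n → ℝ, u ⬝ᵥ u =
      ∑ j, (inner ℝ (b j) ((WithLp.equiv 2 (Fin n → ℝ)).symm u) : ℝ)^2 := by
    intro u
    set u' : EuclideanSpace ℝ (Fin n) := (WithLp.equiv 2 (Fin n → ℝ)).symm u with hu'
    rw [dot_eq_inner, ← OrthonormalBasis.sum_inner_mul_inner b u' u']
    refine Finset.sum_congr rfl fun j _ => ?_
    rw [real_inner_comm (b j) u']
    ring
  have hbound : ∀ u : Fin n → ℝ, u ⬝ᵥ u = 1 → u ⬝ᵥ (N *ᵥ u) ≤ μ := by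
    intro u hu
    rw [hquad u]
    calc ∑ j, ev j * (inner ℝ (b j) ((WithLp.equiv 2 (Fin n → ℝ)).symm u) : ℝ)^2
        ≤ ∑ j, μ * (inner ℝ (b j) ((WithLp.equiv 2 (Fin n → ℝ)).symm u) : ℝ)^2 := by
          refine Finset.sum_le_sum fun j _ => ?_
          exact mul_le_mul_of_nonneg_right (hj0 j) (sq_nonneg _)
      _ = μ * (u ⬝ᵥ u) := by rw [hnorm u, Finset.mul_sum]
      _ = μ := by rw [hu, mul_one]
  set w : Fin n → ℝ := WithLp.equiv 2 (Fin n → ℝ) (b j0) with hw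
  have hww : w ⬝ᵥ w = 1 := by
    rw [dot_eq_inner]
    simp only [hw, Equiv.symm_apply_apply]
    rw [real_inner_self_eq_norm_sq, b.orthonormal.1 j0]
    norm_num
  have hwe : N *ᵥ w = μ • w := hN.mulVec_eigenvectorBasis j0
  have hmem : μ = w ⬝ᵥ (N *ᵥ w) := by
    rw [hwe, dotProduct_smul, hww, smul_eq_mul, mul_one]
  have hlam : lamMax N = μ := by
    apply le_antisymm
    · apply csSup_le
      · exact ⟨μ, ⟨w, hww, hmem⟩⟩
      · rintro r ⟨u, hu, rfl⟩
        exact hbound u hu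
    · exact le_csSup ⟨μ, by rintro r ⟨u, hu, rfl⟩; exact hbound u hu⟩ ⟨w, hww, hmem⟩
  exact ⟨w, hww, by rw [hlam]; exact hwe, fun u hu => (hbound u hu).trans_eq hlam.symm⟩

set_option maxHeartbeats 1000000 in
/-- if a unit vector `v` has a strictly dominating group `i` with
`hᵢ(v) > 0` and `hᵢ(v) > hⱼ(v)` for all `j ≠ i`, then `v` is not a minimizer of
`u ↦ maxⱼ hⱼ(u)` over the unit sphere. -/
theorem stmt2 {n k : ℕ} (hk : 2 ≤ k) {m : Fin k → ℕ}
    (A : ∀ i : Fin k, Matrix (Fin (m i)) (Fin n) ℝ)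
    (v : Fin n → ℝ) (hv : v ⬝ᵥ v = 1)
    (i : Fin k) (hpos : 0 < fairLoss (A i) v)
    (hdom : ∀ j : Fin k, j ≠ i → fairLoss (A j) v < fairLoss (A i) v) :
    ∃ v' : Fin n → ℝ, v' ⬝ᵥ v' = 1 ∧
      (⨆ j : Fin k, fairLoss (A j) v') < ⨆ j : Fin k, fairLoss (A j) v := by
  haveI : NeZero k := ⟨by omega⟩
  have hn : 0 < n := by
    rcases Nat.eq_zero_or_pos n with h | h
    · subst h; simp [dotProduct] at hv
    · exact h
  set N : Fin k → Matrix (Fin n) (Fin n) ℝ := fun j => (A j)ᵀ * (A j) with hNdef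
  have hfair : ∀ (j : Fin k) (x : Fin n → ℝ),
      fairLoss (A j) x = lamMax (N j) - x ⬝ᵥ (N j *ᵥ x) := fun _ _ => rfl
  have hNsym : ∀ (j : Fin k) (x y : Fin n → ℝ), x ⬝ᵥ (N j *ᵥ y) = y ⬝ᵥ (N j *ᵥ x) := by
    intro j x y
    have hT : (N j)ᵀ = N j := by rw [hNdef]; simp [transpose_mul, transpose_transpose]
    rw [dotProduct_mulVec, ← Matrix.mulVec_transpose, hT, dotProduct_comm]
  have hNh : (N i).IsHermitian := by
    rw [Matrix.IsHermitian, Matrix.conjTranspose_eq_transpose_of_trivial, hNdef,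
      transpose_mul, transpose_transpose]
  obtain ⟨w0, hw0w, hw0e, -⟩ := lamMax_spec hn hNh
  set lam : Fin k → ℝ := fun j => lamMax (N j) with hlam
  set w : Fin n → ℝ := if 0 ≤ v ⬝ᵥ w0 then w0 else -w0 with hwdef
  have hww : w ⬝ᵥ w = 1 := by
    rw [hwdef]; split <;> simp [hw0w, dotProduct_neg, neg_dotProduct]
  have hwe : N i *ᵥ w = lam i • w := by
    rw [hwdef]; split
    · exact hw0e
    · rw [mulVec_neg, hw0e, smul_neg]
  set c : ℝ := v ⬝ᵥ w with hc
  have hc0 : 0 ≤ c := by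
    rw [hc, hwdef]; split
    · assumption
    · rw [dotProduct_neg]; linarith [not_le.1 (by assumption)]
  set q : Fin k → ℝ := fun j => v ⬝ᵥ (N j *ᵥ v) with hq
  set r : Fin k → ℝ := fun j => v ⬝ᵥ (N j *ᵥ w) with hr
  set a : Fin k → ℝ := fun j => w ⬝ᵥ (N j *ᵥ w) with ha
  have hri : r i = lam i * c := by
    rw [hr]; simp only [hwe]
    rw [dotProduct_smul, smul_eq_mul, hc]
  have hai : a i = lam i := by
    rw [ha]; simp only [hwe]
    rw [dotProduct_smul, smul_eq_mul, hww, mul_one]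
  set H : ℝ := fairLoss (A i) v with hH
  have hHq : H = lam i - q i := hfair i v
  set K : Fin k → ℝ := fun j => |2 * c * lam j - 2 * r j| + |lam j - a j| with hK
  obtain ⟨j2, hj2⟩ := Finite.exists_max K
  have hjne : ∃ j : Fin k, j ≠ i := by
    haveI : Nontrivial (Fin k) := Fin.nontrivial_iff_two_le.mpr hk
    exact exists_ne i
  haveI : Nonempty {j : Fin k // j ≠ i} := ⟨⟨hjne.choose, hjne.choose_spec⟩⟩
  obtain ⟨j1, hj1⟩ := Finite.exists_max (fun j : {j : Fin k // j ≠ i} => fairLoss (A j.1) v)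
  set δ : ℝ := H - fairLoss (A j1.1) v with hδ
  have hδ0 : 0 < δ := sub_pos.mpr (hdom j1.1 j1.2)
  have hKj2 : 0 ≤ K j2 := by rw [hK]; positivity
  have hKpos : 0 < K j2 + 1 := by linarith
  set t : ℝ := min 1 (δ / (2 * (K j2 + 1))) with ht
  have ht0 : 0 < t := lt_min one_pos (by positivity)
  have ht1 : t ≤ 1 := min_le_left _ _
  have htK : ∀ j : Fin k, t * K j ≤ δ / 2 := by
    intro j
    have h1 : t ≤ δ / (2 * (K j2 + 1)) := min_le_right _ _
    have h2 : K j ≤ K j2 + 1 := le_trans (hj2 j) (by linarith)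
    have h3 : 0 ≤ K j := by rw [hK]; positivity
    calc t * K j ≤ (δ / (2 * (K j2 + 1))) * (K j2 + 1) :=
          mul_le_mul h1 h2 h3 (by positivity)
      _ = δ / 2 := by field_simp
  set s : Fin n → ℝ := v + t • w with hs
  set d : ℝ := 1 + (2 * t * c + t ^ 2) with hd
  have hsd : s ⬝ᵥ s = d := by
    rw [hs, hd]
    simp only [dotProduct_add, add_dotProduct, dotProduct_smul, smul_dotProduct, smul_eq_mul,
      hv, hww]
    rw [dotProduct_comm w v, ← hc]
    ring
  have hd1 : 1 < d := by
    rw [hd]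
    have h1 : 0 ≤ 2 * t * c := by positivity
    have h2 : 0 < t ^ 2 := by positivity
    linarith
  have hd0 : 0 < d := by linarith
  set v' : Fin n → ℝ := (Real.sqrt d)⁻¹ • s with hv'def
  have hsq : Real.sqrt d * Real.sqrt d = d := Real.mul_self_sqrt hd0.le
  have hsq0 : Real.sqrt d ≠ 0 := ne_of_gt (Real.sqrt_pos.mpr hd0)
  have hv'1 : v' ⬝ᵥ v' = 1 := by
    rw [hv'def, smul_dotProduct, dotProduct_smul, hsd, smul_eq_mul, smul_eq_mul]
    rw [← mul_assoc, ← mul_inv, hsq]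
    exact inv_mul_cancel₀ hd0.ne'
  have hsNs : ∀ j : Fin k, s ⬝ᵥ (N j *ᵥ s) = q j + 2 * t * r j + t ^ 2 * a j := by
    intro j
    rw [hs]
    simp only [mulVec_add, mulVec_smul, dotProduct_add, add_dotProduct, dotProduct_smul,
      smul_dotProduct, smul_eq_mul]
    rw [hNsym j w v, hq, hr, ha]
    ring
  have hv'N : ∀ j : Fin k, v' ⬝ᵥ (N j *ᵥ v') = (q j + 2 * t * r j + t ^ 2 * a j) / d := by
    intro j
    rw [hv'def, mulVec_smul, dotProduct_smul, smul_dotProduct, hsNs j, smul_eq_mul, smul_eq_mul]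
    rw [← mul_assoc, ← mul_inv, hsq, eq_div_iff hd0.ne']
    rw [mul_comm]
    rw [← mul_assoc, mul_inv_cancel₀ hd0.ne', one_mul]
  have hfl' : ∀ j : Fin k, fairLoss (A j) v' = lam j - (q j + 2 * t * r j + t ^ 2 * a j) / d := by
    intro j; rw [hfair j v', hv'N j]
  have hfairv : ∀ j : Fin k, fairLoss (A j) v = lam j - q j := fun j => hfair j v
  have hKdef : ∀ j : Fin k, K j = |2 * c * lam j - 2 * r j| + |lam j - a j| := fun j => rfl
  clear_value N lam w c q r a H K δ t s d v'
  have key : ∀ j : Fin k, fairLoss (A j) v' < H := by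
    intro j
    by_cases hji : j = i
    · subst hji
      have heq : fairLoss (A j) v' = H / d := by
        rw [hfl' j, hri, hai, hHq, eq_div_iff hd0.ne', sub_mul,
          div_mul_cancel₀ _ hd0.ne', hd]
        ring
      rw [heq]
      exact div_lt_self hpos hd1
    · have hnum : fairLoss (A j) v' =
          (fairLoss (A j) v + t * ((2 * c * lam j - 2 * r j) + t * (lam j - a j))) / d := by
        rw [hfl' j, hfairv j, eq_div_iff hd0.ne', sub_mul,
          div_mul_cancel₀ _ hd0.ne', hd]
        ring
      have hup : (2 * c * lam j - 2 * r j) + t * (lam j - a j) ≤ K j := by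
        rw [hKdef j]
        have h2 : t * (lam j - a j) ≤ |lam j - a j| := by
          calc t * (lam j - a j) ≤ t * |lam j - a j| :=
              mul_le_mul_of_nonneg_left (le_abs_self _) ht0.le
            _ ≤ 1 * |lam j - a j| := mul_le_mul_of_nonneg_right ht1 (abs_nonneg _)
            _ = |lam j - a j| := one_mul _
        linarith [le_abs_self (2 * c * lam j - 2 * r j)]
      have hjH : fairLoss (A j) v ≤ H - δ := by
        have := hj1 ⟨j, hji⟩
        simp only at this
        rw [hδ]; linarith
      have hnumlt : fairLoss (A j) v + t * ((2 * c * lam j - 2 * r j) + t * (lam j - a j)) < H := by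
        have h4 := htK j
        have h5 : t * ((2 * c * lam j - 2 * r j) + t * (lam j - a j)) ≤ t * K j :=
          mul_le_mul_of_nonneg_left hup ht0.le
        linarith
      rw [hnum]
      rcases le_or_gt 0 (fairLoss (A j) v + t * ((2 * c * lam j - 2 * r j) + t * (lam j - a j)))
        with hge | hlt
      · calc _ ≤ fairLoss (A j) v + t * ((2 * c * lam j - 2 * r j) + t * (lam j - a j)) :=
            div_le_self hge hd1.le
          _ < H := hnumlt
      · calc _ < (0:ℝ) := div_neg_of_neg_of_pos hlt hd0
          _ < H := hpos
  refine ⟨v', hv'1, ?_⟩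
  obtain ⟨j0, hj0⟩ := Finite.exists_max (fun j : Fin k => fairLoss (A j) v')
  have h1 : (⨆ j : Fin k, fairLoss (A j) v') ≤ fairLoss (A j0) v' := ciSup_le hj0
  have h2 : fairLoss (A i) v ≤ ⨆ j : Fin k, fairLoss (A j) v :=
    le_ciSup (f := fun j : Fin k => fairLoss (A j) v)
      (Set.Finite.bddAbove (Set.finite_range _)) i
  rw [← hH] at h2
  exact lt_of_le_of_lt h1 (lt_of_lt_of_le (key j0) h2)
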